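/- Let (X,d) be a metric space which is the union of two subsets A and B. Let φ_A : A → ℝ^a and φ_B : B → ℝ^b be non-contracting embeddings with ‖φ_A‖_Lip ≤ D_A and ‖φ_B‖_Lip ≤ D_B. Then there exists a non-contracting embedding Ψ : X → ℝ^{a+b+1} with ‖Ψ‖_Lip ≤ 7·D_A·D_B + 2·(D_A + D_B) such that ‖Ψ(u) − Ψ(v)‖ ≥ ‖φ_A(u) − φ_A(v)‖ for all u,v ∈ A and ‖Ψ(u) − Ψ(v)‖ ≥ ‖φ_B(u) − φ_B(v)‖ for all u,v ∈ B. -/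

import Mathlib

open Finset Metric Set Filter Topology

noncomputable section


open Finset Metric Set

noncomputable section

variable {E F : Type*} [NormedAddCommGroup E] [InnerProductSpace ℝ E]
  [NormedAddCommGroup F] [InnerProductSpace ℝ F] [FiniteDimensional ℝ F]

local notation "⟪" x ", " y "⟫" => @inner ℝ _ _ x y

private lemma sq_le_to_le {a b : ℝ} (ha : 0 ≤ a) (hb : 0 ≤ b) (h : a ^ 2 ≤ b ^ 2) :
    a ≤ b := by nlinarith

set_option maxHeartbeats 1000000 in
theorem kirszbraun_finset_onePoint (L : ℝ) (hL : 0 ≤ L) (T : Finset (E × F))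
    (hT : ∀ p ∈ T, ∀ q ∈ T, ‖p.2 - q.2‖ ≤ L * ‖p.1 - q.1‖) (u : E) :
    ∃ z : F, ∀ p ∈ T, ‖z - p.2‖ ≤ L * ‖u - p.1‖ := by
  classical
  rcases T.eq_empty_or_nonempty with rfl | hne
  · exact ⟨0, by simp⟩
  by_cases hmem : ∃ p ∈ T, p.1 = u
  · obtain ⟨p, hp, hpu⟩ := hmem
    refine ⟨p.2, fun q hq => ?_⟩
    have := hT p hp q hq
    rwa [hpu] at this
  push_neg at hmem
  set f : E × F → F → ℝ := fun p z => ‖z - p.2‖ ^ 2 - L ^ 2 * ‖u - p.1‖ ^ 2 with hf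
  set G : F → ℝ := fun z => T.sup' hne (fun p => f p z) with hG
  have hfc : ∀ p ∈ T, Continuous (f p) := by
    intro p _
    apply Continuous.sub _ continuous_const
    exact (continuous_id.sub continuous_const).norm.pow 2
  have hGc : Continuous G := by
    rw [continuous_iff_continuousAt]
    intro z
    exact ContinuousAt.finset_sup'_apply hne (fun p hp => (hfc p hp).continuousAt)
  obtain ⟨p₀, hp₀⟩ := id hne
  set z₀ := p₀.2 with hz₀
  set C₀ := L ^ 2 * ‖u - p₀.1‖ ^ 2 with hC₀
  have hC₀0 : 0 ≤ C₀ := by positivity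
  have hGz₀ : 0 ≤ G z₀ + C₀ := by
    have : f p₀ z₀ ≤ G z₀ := Finset.le_sup' (f · z₀) hp₀
    simp only [hf, sub_self, norm_zero] at this
    nlinarith
  set R := Real.sqrt (G z₀ + C₀) + 1 with hR
  have hR0 : 0 < R := by positivity
  have hKc : IsCompact (closedBall z₀ R) := isCompact_closedBall z₀ R
  obtain ⟨zs, hzsK, hzsmin⟩ := hKc.exists_isMinOn ⟨z₀, mem_closedBall_self hR0.le⟩
    hGc.continuousOn
  have hglobal : ∀ z, G zs ≤ G z := by
    intro z
    by_cases hz : z ∈ closedBall z₀ R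
    · exact hzsmin hz
    · have h1 : R < ‖z - z₀‖ := by
        rw [mem_closedBall, dist_eq_norm, not_le] at hz; exact hz
      have h2 : f p₀ z ≤ G z := Finset.le_sup' (f · z) hp₀
      have h3 : G z₀ ≤ G z := by
        have hsq : (Real.sqrt (G z₀ + C₀)) ^ 2 = G z₀ + C₀ := Real.sq_sqrt hGz₀
        have hRz : R ^ 2 ≤ ‖z - z₀‖ ^ 2 := by nlinarith [norm_nonneg (z - z₀)]
        simp only [hf] at h2
        nlinarith [Real.sqrt_nonneg (G z₀ + C₀)]
      exact le_trans (hzsmin (mem_closedBall_self hR0.le)) h3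
  set μ := G zs with hμ
  by_cases hμ0 : μ ≤ 0
  · refine ⟨zs, fun p hp => ?_⟩
    have h1 : f p zs ≤ μ := Finset.le_sup' (f · zs) hp
    simp only [hf] at h1
    refine sq_le_to_le (norm_nonneg _) (by positivity) ?_
    rw [mul_pow]
    nlinarith
  exfalso
  push_neg at hμ0
  set I := T.filter (fun p => f p zs = μ) with hI
  have hIsub : I ⊆ T := Finset.filter_subset _ _
  have hIne : I.Nonempty := by
    obtain ⟨p, hp, hpe⟩ := T.exists_mem_eq_sup' hne (f · zs)
    exact ⟨p, Finset.mem_filter.2 ⟨hp, hpe.symm⟩⟩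
  set J := I.image Prod.snd with hJ
  have hJne : J.Nonempty := hIne.image _
  have claim1 : zs ∈ convexHull ℝ (J : Set F) := by
    by_contra hzK
    have hKconv : Convex ℝ (convexHull ℝ (J : Set F)) := convex_convexHull ℝ _
    have hKcomp : IsCompact (convexHull ℝ (J : Set F)) :=
      J.finite_toSet.isCompact_convexHull ℝ
    have hKne : (convexHull ℝ (J : Set F)).Nonempty :=
      hJne.to_set.mono (subset_convexHull ℝ _)
    obtain ⟨v, hvK, hvmin⟩ := exists_norm_eq_iInf_of_complete_convex hKne
      hKcomp.isClosed.isComplete hKconv zs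
    have hproj := (norm_eq_iInf_iff_real_inner_le_zero hKconv hvK).mp hvmin
    set dir := v - zs with hdir
    have hdirne : dir ≠ 0 := by
      intro h
      have hv : v = zs := by rwa [hdir, sub_eq_zero] at h
      exact hzK (hv ▸ hvK)
    set δ := ‖dir‖ ^ 2 with hδ
    have hδ0 : 0 < δ := by
      have := norm_pos_iff.mpr hdirne
      positivity
    have key : ∀ y ∈ J, δ ≤ ⟪y - zs, dir⟫ := by
      intro y hy
      have hyK : y ∈ convexHull ℝ (J : Set F) := subset_convexHull ℝ _ hy
      have h1 : ⟪zs - v, y - v⟫ ≤ 0 := hproj y hyK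
      have h2 : y - zs = (y - v) + dir := by rw [hdir]; abel
      have h3 : ⟪y - v, dir⟫ = -⟪zs - v, y - v⟫ :=
        calc ⟪y - v, dir⟫ = ⟪dir, y - v⟫ := real_inner_comm _ _
          _ = ⟪-(zs - v), y - v⟫ := by rw [hdir]; congr 1; abel
          _ = -⟪zs - v, y - v⟫ := by rw [inner_neg_left]
      have h4 : ⟪dir, dir⟫ = δ := real_inner_self_eq_norm_sq dir
      rw [h2, inner_add_left, h3, h4]
      linarith
    set TI := T \ I with hTI
    have hgap : ∀ p ∈ TI, f p zs < μ := by
      intro p hp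
      obtain ⟨hpT, hpI⟩ := Finset.mem_sdiff.mp hp
      refine lt_of_le_of_ne (Finset.le_sup' (f · zs) hpT) ?_
      intro h
      exact hpI (Finset.mem_filter.2 ⟨hpT, h⟩)
    set Cb := T.sup' hne (fun p => 2 * |⟪zs - p.2, dir⟫| + δ) with hCb
    have hCb0 : 0 < Cb := by
      have h1 : (fun p => 2 * |⟪zs - p.2, dir⟫| + δ) p₀ ≤ Cb :=
        Finset.le_sup' (fun p => 2 * |⟪zs - p.2, dir⟫| + δ) hp₀
      have h0 : 0 ≤ |⟪zs - p₀.2, dir⟫| := abs_nonneg _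
      simp only at h1
      linarith
    obtain ⟨γ, hγ0, hγlt⟩ : ∃ γ : ℝ, 0 < γ ∧ ∀ p ∈ TI, γ < μ - f p zs := by
      rcases TI.eq_empty_or_nonempty with h | h
      · exact ⟨1, one_pos, by simp [h]⟩
      · refine ⟨(TI.inf' h (fun p => μ - f p zs)) / 2, ?_, ?_⟩
        · have h2 : 0 < TI.inf' h (fun p => μ - f p zs) := by
            rw [Finset.lt_inf'_iff]
            intro q hq
            linarith [hgap q hq]
          linarith
        · intro p hp
          have h1 : TI.inf' h (fun p => μ - f p zs) ≤ μ - f p zs :=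
            Finset.inf'_le _ hp
          have h2 : 0 < TI.inf' h (fun p => μ - f p zs) := by
            rw [Finset.lt_inf'_iff]
            intro q hq
            linarith [hgap q hq]
          exact lt_of_lt_of_le (half_lt_self h2) h1
    set τ := min 1 (γ / Cb) with hτ
    have hτ0 : 0 < τ := lt_min one_pos (div_pos hγ0 hCb0)
    have hτ1 : τ ≤ 1 := min_le_left _ _
    have hτC : τ * Cb ≤ γ := by
      have : τ ≤ γ / Cb := min_le_right _ _
      calc τ * Cb ≤ (γ / Cb) * Cb := by nlinarith
        _ = γ := by field_simp
    have hexp : ∀ p : E × F, f p (zs + τ • dir)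
        = f p zs + 2 * τ * ⟪zs - p.2, dir⟫ + τ ^ 2 * δ := by
      intro p
      simp only [hf]
      have h1 : zs + τ • dir - p.2 = (zs - p.2) + τ • dir := by abel
      rw [h1, norm_add_sq_real, real_inner_smul_right, norm_smul]
      simp [mul_pow, hδ]
      ring
    have hlt : G (zs + τ • dir) < μ := by
      rw [hG, Finset.sup'_lt_iff]
      intro p hp
      by_cases hpI : p ∈ I
      · have hy : p.2 ∈ J := Finset.mem_image_of_mem _ hpI
        have h1 : ⟪zs - p.2, dir⟫ ≤ -δ := by
          have := key p.2 hy
          have h2 : ⟪zs - p.2, dir⟫ = -⟪p.2 - zs, dir⟫ := by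
            rw [show zs - p.2 = -(p.2 - zs) by abel, inner_neg_left]
          linarith
        have h2 : f p zs = μ := (Finset.mem_filter.mp hpI).2
        rw [hexp p, h2]
        nlinarith [mul_le_mul_of_nonneg_left h1 hτ0.le, mul_pos hτ0 hδ0,
          mul_le_mul_of_nonneg_right hτ1 (mul_pos hτ0 hδ0).le, sq_nonneg τ]
      · have hp' : p ∈ TI := Finset.mem_sdiff.2 ⟨hp, hpI⟩
        have h1 : 2 * |⟪zs - p.2, dir⟫| + δ ≤ Cb :=
          Finset.le_sup' (fun p => 2 * |⟪zs - p.2, dir⟫| + δ) hp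
        have h2 : γ < μ - f p zs := hγlt p hp'
        rw [hexp p]
        have h3 : 2 * τ * ⟪zs - p.2, dir⟫ + τ ^ 2 * δ ≤ τ * Cb := by
          have ha : ⟪zs - p.2, dir⟫ ≤ |⟪zs - p.2, dir⟫| := le_abs_self _
          nlinarith [abs_nonneg ⟪zs - p.2, dir⟫, mul_le_mul_of_nonneg_left h1 hτ0.le,
            mul_le_mul_of_nonneg_left ha hτ0.le,
            mul_le_mul_of_nonneg_right hτ1 (mul_pos hτ0 hδ0).le]
        linarith [hτC]
    exact absurd (hglobal (zs + τ • dir)) (not_le.mpr hlt)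
  -- claim 2 : contradiction from the convex combination
  rw [Finset.convexHull_eq] at claim1
  obtain ⟨w, hw0, hw1, hwc⟩ := claim1
  rw [Finset.centerMass_eq_of_sum_1 _ _ hw1] at hwc
  simp only [id] at hwc
  have hsec : ∀ y, y ∈ J → ∃ p, p ∈ I ∧ p.2 = y := by
    intro y hy
    obtain ⟨p, hp, hpe⟩ := Finset.mem_image.mp hy
    exact ⟨p, hp, hpe⟩
  choose! pos hposI hposY using hsec
  have hactive : ∀ y ∈ J, ‖zs - y‖ ^ 2 = μ + L ^ 2 * ‖u - (pos y).1‖ ^ 2 := by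
    intro y hy
    have h1 : f (pos y) zs = μ := (Finset.mem_filter.mp (hposI y hy)).2
    simp only [hf] at h1
    rw [hposY y hy] at h1
    linarith
  have hpair : ∀ y ∈ J, ∀ y' ∈ J,
      μ + L ^ 2 * ⟪u - (pos y).1, u - (pos y').1⟫ ≤ ⟪zs - y, zs - y'⟫ := by
    intro y hy y' hy'
    have e := (pos y).1
    have hTy : pos y ∈ T := hIsub (hposI y hy)
    have hTy' : pos y' ∈ T := hIsub (hposI y' hy')
    have hnorm : ‖y - y'‖ ≤ L * ‖(pos y).1 - (pos y').1‖ := by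
      have := hT (pos y) hTy (pos y') hTy'
      rwa [hposY y hy, hposY y' hy'] at this
    have hnorm2 : ‖y - y'‖ ^ 2 ≤ L ^ 2 * ‖(pos y).1 - (pos y').1‖ ^ 2 := by
      rw [← mul_pow]
      exact pow_le_pow_left₀ (norm_nonneg _) hnorm 2
    have id1 : ‖(zs - y) - (zs - y')‖ ^ 2
        = ‖zs - y‖ ^ 2 - 2 * ⟪zs - y, zs - y'⟫ + ‖zs - y'‖ ^ 2 :=
      norm_sub_sq_real _ _
    have id1' : (zs - y) - (zs - y') = y' - y := by abel
    rw [id1'] at id1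
    have id2 : ‖(u - (pos y).1) - (u - (pos y').1)‖ ^ 2
        = ‖u - (pos y).1‖ ^ 2 - 2 * ⟪u - (pos y).1, u - (pos y').1⟫
          + ‖u - (pos y').1‖ ^ 2 := norm_sub_sq_real _ _
    have id2' : (u - (pos y).1) - (u - (pos y').1) = (pos y').1 - (pos y).1 := by abel
    rw [id2'] at id2
    have hay : ‖zs - y‖ ^ 2 = μ + L ^ 2 * ‖u - (pos y).1‖ ^ 2 := hactive y hy
    have hay' : ‖zs - y'‖ ^ 2 = μ + L ^ 2 * ‖u - (pos y').1‖ ^ 2 := hactive y' hy'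
    have hsymm : ‖y - y'‖ = ‖y' - y‖ := norm_sub_rev _ _
    have hsymm2 : ‖(pos y).1 - (pos y').1‖ = ‖(pos y').1 - (pos y).1‖ := norm_sub_rev _ _
    rw [hsymm, hsymm2] at hnorm2
    nlinarith
  -- expand the double sums
  set av : F → F := fun y => zs - y with hav
  set bv : F → E := fun y => u - (pos y).1 with hbv
  have hsum0 : ∑ y ∈ J, w y • av y = 0 := by
    simp only [hav, smul_sub]
    rw [Finset.sum_sub_distrib, ← Finset.sum_smul, hw1, one_smul, hwc, sub_self]
  have hS1 : (0:ℝ) = ∑ y ∈ J, ∑ y' ∈ J, (w y * w y') * ⟪av y, av y'⟫ := by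
    have h0 : ⟪∑ y ∈ J, w y • av y, ∑ y' ∈ J, w y' • av y'⟫ = (0:ℝ) := by
      rw [hsum0, inner_zero_left]
    rw [← h0, sum_inner]
    apply Finset.sum_congr rfl
    intro y hy
    rw [inner_sum]
    apply Finset.sum_congr rfl
    intro y' hy'
    rw [real_inner_smul_left, real_inner_smul_right]
    ring
  have hbnn : (0:ℝ) ≤ ∑ y ∈ J, ∑ y' ∈ J, (w y * w y') * ⟪bv y, bv y'⟫ := by
    have h0 : ⟪∑ y ∈ J, w y • bv y, ∑ y' ∈ J, w y' • bv y'⟫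
        = ∑ y ∈ J, ∑ y' ∈ J, (w y * w y') * ⟪bv y, bv y'⟫ := by
      rw [sum_inner]
      apply Finset.sum_congr rfl
      intro y hy
      rw [inner_sum]
      apply Finset.sum_congr rfl
      intro y' hy'
      rw [real_inner_smul_left, real_inner_smul_right]
      ring
    rw [← h0]
    exact real_inner_self_nonneg
  have hcompare : ∑ y ∈ J, ∑ y' ∈ J, (w y * w y') * (μ + L ^ 2 * ⟪bv y, bv y'⟫)
      ≤ ∑ y ∈ J, ∑ y' ∈ J, (w y * w y') * ⟪av y, av y'⟫ := by
    apply Finset.sum_le_sum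
    intro y hy
    apply Finset.sum_le_sum
    intro y' hy'
    apply mul_le_mul_of_nonneg_left (hpair y hy y' hy')
    exact mul_nonneg (hw0 y hy) (hw0 y' hy')
  have hexpand : ∑ y ∈ J, ∑ y' ∈ J, (w y * w y') * (μ + L ^ 2 * ⟪bv y, bv y'⟫)
      = μ + L ^ 2 * ∑ y ∈ J, ∑ y' ∈ J, (w y * w y') * ⟪bv y, bv y'⟫ := by
    have h1 : ∀ y ∈ J, ∑ y' ∈ J, (w y * w y') * (μ + L ^ 2 * ⟪bv y, bv y'⟫)
        = w y * μ + L ^ 2 * ∑ y' ∈ J, (w y * w y') * ⟪bv y, bv y'⟫ := by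
      intro y hy
      rw [Finset.mul_sum]
      have : ∀ y' ∈ J, (w y * w y') * (μ + L ^ 2 * ⟪bv y, bv y'⟫)
          = (w y * w y') * μ + L ^ 2 * ((w y * w y') * ⟪bv y, bv y'⟫) := by
        intro y' _; ring
      rw [Finset.sum_congr rfl this, Finset.sum_add_distrib]
      congr 1
      rw [← Finset.sum_mul, ← Finset.mul_sum, hw1]
      ring
    rw [Finset.sum_congr rfl h1, Finset.sum_add_distrib]
    congr 1
    · rw [← Finset.sum_mul, hw1, one_mul]
    · rw [Finset.mul_sum]
  nlinarith [hbnn, hcompare, hexpand, hS1]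

theorem kirszbraun_set_onePoint (L : ℝ) (hL : 0 ≤ L) (M : Set (E × F))
    (hM : ∀ p ∈ M, ∀ q ∈ M, ‖p.2 - q.2‖ ≤ L * ‖p.1 - q.1‖) (u : E) :
    ∃ z : F, ∀ p ∈ M, ‖z - p.2‖ ≤ L * ‖u - p.1‖ := by
  classical
  rcases M.eq_empty_or_nonempty with rfl | ⟨p₀, hp₀⟩
  · exact ⟨0, by simp⟩
  set C : M → Set F := fun p => Metric.closedBall p.1.2 (L * ‖u - p.1.1‖) with hC
  by_cases hne : (Metric.closedBall p₀.2 (L * ‖u - p₀.1‖) ∩ ⋂ p : M, C p).Nonempty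
  · obtain ⟨z, _, hz2⟩ := hne
    refine ⟨z, fun p hp => ?_⟩
    have := Set.mem_iInter.mp hz2 ⟨p, hp⟩
    simpa [hC, dist_eq_norm] using this
  · exfalso
    rw [Set.not_nonempty_iff_eq_empty] at hne
    obtain ⟨t, ht⟩ := (isCompact_closedBall p₀.2 (L * ‖u - p₀.1‖)).elim_finite_subfamily_closed
      C (fun p => Metric.isClosed_closedBall) hne
    set T : Finset (E × F) := insert p₀ (t.image Subtype.val) with hT
    have hTsub : ∀ p ∈ T, p ∈ M := by
      intro p hp
      rcases Finset.mem_insert.mp hp with rfl | hp'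
      · exact hp₀
      · obtain ⟨q, _, rfl⟩ := Finset.mem_image.mp hp'
        exact q.2
    obtain ⟨z, hz⟩ := kirszbraun_finset_onePoint L hL T
      (fun p hp q hq => hM p (hTsub p hp) q (hTsub q hq)) u
    have hz0 : z ∈ Metric.closedBall p₀.2 (L * ‖u - p₀.1‖) := by
      rw [Metric.mem_closedBall, dist_eq_norm]
      exact hz p₀ (Finset.mem_insert_self _ _)
    have hzt : z ∈ ⋂ p ∈ t, C p := by
      rw [Set.mem_iInter₂]
      intro p hp
      rw [hC]
      rw [Metric.mem_closedBall, dist_eq_norm]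
      exact hz p.1 (Finset.mem_insert_of_mem (Finset.mem_image_of_mem _ hp))
    rw [Set.eq_empty_iff_forall_notMem] at ht
    exact ht z ⟨hz0, hzt⟩

theorem kirszbraun_graph (L : ℝ) (hL : 0 ≤ L) (M : Set (E × F))
    (hM : ∀ p ∈ M, ∀ q ∈ M, ‖p.2 - q.2‖ ≤ L * ‖p.1 - q.1‖) :
    ∃ g : E → F, (∀ p ∈ M, g p.1 = p.2) ∧ ∀ x y, ‖g x - g y‖ ≤ L * ‖x - y‖ := by
  classical
  set S : Set (Set (E × F)) :=
    {G | M ⊆ G ∧ ∀ p ∈ G, ∀ q ∈ G, ‖p.2 - q.2‖ ≤ L * ‖p.1 - q.1‖} with hS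
  have hMS : M ∈ S := ⟨subset_rfl, hM⟩
  have hchains : ∀ c ⊆ S, IsChain (· ⊆ ·) c → c.Nonempty →
      ∃ ub ∈ S, ∀ s ∈ c, s ⊆ ub := by
    intro c hcS hchain hcne
    refine ⟨⋃₀ c, ⟨?_, ?_⟩, fun s hs => Set.subset_sUnion_of_mem hs⟩
    · obtain ⟨s, hs⟩ := hcne
      exact (hcS hs).1.trans (Set.subset_sUnion_of_mem hs)
    · intro p hp q hq
      obtain ⟨s, hsc, hps⟩ := Set.mem_sUnion.mp hp
      obtain ⟨s', hs'c, hqs'⟩ := Set.mem_sUnion.mp hq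
      rcases hchain.total hsc hs'c with h | h
      · exact (hcS hs'c).2 p (h hps) q hqs'
      · exact (hcS hsc).2 p hps q (h hqs')
  obtain ⟨G, hMG, hGmax⟩ := zorn_subset_nonempty S hchains M hMS
  have hGpairs := hGmax.1.2
  have htot : ∀ x : E, ∃ y, (x, y) ∈ G := by
    intro x
    by_contra hx
    push_neg at hx
    obtain ⟨z, hz⟩ := kirszbraun_set_onePoint L hL G hGpairs x
    have hins : insert (x, z) G ∈ S := by
      refine ⟨hMG.trans (Set.subset_insert _ _), ?_⟩
      intro p hp q hq
      rcases Set.mem_insert_iff.mp hp with rfl | hpG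
      · rcases Set.mem_insert_iff.mp hq with rfl | hqG
        · simp
        · exact hz q hqG
      · rcases Set.mem_insert_iff.mp hq with rfl | hqG
        · rw [norm_sub_rev, norm_sub_rev p.1]
          exact hz p hpG
        · exact hGpairs p hpG q hqG
    have hsub := hGmax.2 hins (Set.subset_insert _ _)
    exact hx z (hsub (Set.mem_insert _ _))
  choose g hg using htot
  refine ⟨g, ?_, ?_⟩
  · intro p hp
    have h1 := hGpairs (p.1, g p.1) (hg p.1) p (hMG hp)
    simp only [sub_self, norm_zero, mul_zero] at h1
    have h2 : g p.1 - p.2 = 0 := norm_le_zero_iff.mp h1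
    rwa [sub_eq_zero] at h2
  · intro x y
    exact hGpairs (x, g x) (hg x) (y, g y) (hg y)

end





theorem extend_to_closure {X F : Type*} [MetricSpace X] [NormedAddCommGroup F]
    [CompleteSpace F] (φ : X → F) (s : Set X) (D : ℝ) (hD : 0 ≤ D)
    (h : ∀ x ∈ s, ∀ y ∈ s, dist x y ≤ dist (φ x) (φ y) ∧ dist (φ x) (φ y) ≤ D * dist x y) :
    ∃ ψ : X → F, (∀ x ∈ s, ψ x = φ x) ∧
      ∀ x ∈ closure s, ∀ y ∈ closure s,
        dist x y ≤ dist (ψ x) (ψ y) ∧ dist (ψ x) (ψ y) ≤ D * dist x y := by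
  classical
  have hcau : ∀ x ∈ closure s, Cauchy ((𝓝[s] x).map φ) := by
    intro x hx
    haveI : (𝓝[s] x).NeBot := mem_closure_iff_nhdsWithin_neBot.mp hx
    rw [Metric.cauchy_iff]
    refine ⟨Filter.map_neBot, fun ε hε => ?_⟩
    set δ := ε / (2 * (D + 1)) with hδ
    have hδ0 : 0 < δ := by positivity
    refine ⟨φ '' (s ∩ ball x δ), ?_, ?_⟩
    · rw [Filter.mem_map]
      have hmem : s ∩ ball x δ ∈ 𝓝[s] x :=
        inter_mem self_mem_nhdsWithin (mem_nhdsWithin_of_mem_nhds (ball_mem_nhds x hδ0))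
      exact Filter.mem_of_superset hmem (fun a ha => Set.mem_image_of_mem φ ha)
    · rintro _ ⟨a, ⟨has, hab⟩, rfl⟩ _ ⟨c, ⟨hcs, hcb⟩, rfl⟩
      have h1 : dist (φ a) (φ c) ≤ D * dist a c := (h a has c hcs).2
      have h2 : dist a c < 2 * δ := by
        have := dist_triangle_right a c x
        rw [mem_ball] at hab hcb
        linarith
      have h3 : D * dist a c ≤ D * (2 * δ) := by nlinarith [dist_nonneg (x := a) (y := c)]
      have h4 : D * (2 * δ) < ε := by
        have hd : δ * (2 * (D + 1)) = ε := by
          rw [hδ]; field_simp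
        nlinarith [hδ0]
      linarith
  have H : ∀ x : X, ∃ y : F, x ∈ closure s → Tendsto φ (𝓝[s] x) (𝓝 y) := by
    intro x
    by_cases hx : x ∈ closure s
    · obtain ⟨y, hy⟩ := CompleteSpace.complete (hcau x hx)
      exact ⟨y, fun _ => hy⟩
    · exact ⟨φ x, fun hx' => absurd hx' hx⟩
  choose ψ hψ using H
  have heq : ∀ x ∈ s, ψ x = φ x := by
    intro x hx
    haveI : (𝓝[s] x).NeBot := mem_closure_iff_nhdsWithin_neBot.mp (subset_closure hx)
    have hcont : Tendsto φ (𝓝[s] x) (𝓝 (φ x)) := by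
      have hlip : LipschitzOnWith D.toNNReal φ s := by
        apply LipschitzOnWith.of_dist_le'
        intro a ha b hb
        exact (h a ha b hb).2
      exact (hlip.continuousOn x hx).tendsto
    exact tendsto_nhds_unique (hψ x (subset_closure hx)) hcont
  refine ⟨ψ, heq, ?_⟩
  intro x hx y hy
  haveI hnx : (𝓝[s] x).NeBot := mem_closure_iff_nhdsWithin_neBot.mp hx
  haveI hny : (𝓝[s] y).NeBot := mem_closure_iff_nhdsWithin_neBot.mp hy
  set l := (𝓝[s] x) ×ˢ (𝓝[s] y) with hl
  haveI : l.NeBot := Filter.prod_neBot.mpr ⟨hnx, hny⟩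
  have Tx : Tendsto (fun p : X × X => φ p.1) l (𝓝 (ψ x)) :=
    (hψ x hx).comp tendsto_fst
  have Ty : Tendsto (fun p : X × X => φ p.2) l (𝓝 (ψ y)) :=
    (hψ y hy).comp tendsto_snd
  have T1 : Tendsto (fun p : X × X => dist (φ p.1) (φ p.2)) l (𝓝 (dist (ψ x) (ψ y))) :=
    Tx.dist Ty
  have T2 : Tendsto (fun p : X × X => dist p.1 p.2) l (𝓝 (dist x y)) := by
    have t1 : Tendsto (fun p : X × X => p.1) l (𝓝 x) :=
      (tendsto_fst.mono_right nhdsWithin_le_nhds)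
    have t2 : Tendsto (fun p : X × X => p.2) l (𝓝 y) :=
      (tendsto_snd.mono_right nhdsWithin_le_nhds)
    exact t1.dist t2
  have hev : ∀ᶠ p : X × X in l, p.1 ∈ s ∧ p.2 ∈ s := by
    have := Filter.prod_mem_prod (self_mem_nhdsWithin : s ∈ 𝓝[s] x)
      (self_mem_nhdsWithin : s ∈ 𝓝[s] y)
    filter_upwards [this] with p hp
    exact hp
  constructor
  · refine le_of_tendsto_of_tendsto T2 T1 ?_
    filter_upwards [hev] with p hp
    exact (h p.1 hp.1 p.2 hp.2).1
  · have T3 : Tendsto (fun p : X × X => D * dist p.1 p.2) l (𝓝 (D * dist x y)) :=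
      T2.const_mul D
    refine le_of_tendsto_of_tendsto T1 T3 ?_
    filter_upwards [hev] with p hp
    exact (h p.1 hp.1 p.2 hp.2).2





def pack (a b : ℕ) (p : EuclideanSpace ℝ (Fin a)) (q : EuclideanSpace ℝ (Fin b)) (r : ℝ) :
    EuclideanSpace ℝ (Fin (a + b + 1)) :=
  WithLp.toLp 2 (fun i => Fin.addCases (fun j => Fin.addCases (fun ja => p ja) (fun jb => q jb) j)
    (fun _ => r) i)

lemma pack_dist (a b : ℕ) (p p' : EuclideanSpace ℝ (Fin a)) (q q' : EuclideanSpace ℝ (Fin b))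
    (r r' : ℝ) :
    dist (pack a b p q r) (pack a b p' q' r')
      = Real.sqrt ((dist p p') ^ 2 + (dist q q') ^ 2 + (r - r') ^ 2) := by
  rw [EuclideanSpace.dist_eq]
  congr 1
  have hsplit : ∑ i : Fin (a + b + 1),
      dist (pack a b p q r i) (pack a b p' q' r' i) ^ 2
      = (∑ j : Fin (a + b), dist (pack a b p q r (Fin.castAdd 1 j))
          (pack a b p' q' r' (Fin.castAdd 1 j)) ^ 2)
        + ∑ j : Fin 1, dist (pack a b p q r (Fin.natAdd (a + b) j))
            (pack a b p' q' r' (Fin.natAdd (a + b) j)) ^ 2 :=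
    Fin.sum_univ_add _
  rw [hsplit]
  have h1 : ∑ j : Fin 1, dist (pack a b p q r (Fin.natAdd (a + b) j))
      (pack a b p' q' r' (Fin.natAdd (a + b) j)) ^ 2 = (r - r') ^ 2 := by
    simp [pack, Real.dist_eq, sq_abs]
  rw [h1]
  have h2 : ∀ j : Fin (a + b), pack a b p q r (Fin.castAdd 1 j)
      = Fin.addCases (fun ja => p ja) (fun jb => q jb) j := by
    intro j; simp [pack]
  have h2' : ∀ j : Fin (a + b), pack a b p' q' r' (Fin.castAdd 1 j)
      = Fin.addCases (fun ja => p' ja) (fun jb => q' jb) j := by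
    intro j; simp [pack]
  have h3 : (∑ j : Fin (a + b), dist (pack a b p q r (Fin.castAdd 1 j))
      (pack a b p' q' r' (Fin.castAdd 1 j)) ^ 2)
      = ∑ j : Fin (a + b), dist (Fin.addCases (fun ja => p ja) (fun jb => q jb) j)
          ((Fin.addCases (fun ja => p' ja) (fun jb => q' jb) j : ℝ)) ^ 2 := by
    refine Finset.sum_congr rfl fun j _ => ?_
    rw [h2 j, h2' j]
  rw [h3, Fin.sum_univ_add]
  simp only [Fin.addCases_left, Fin.addCases_right]
  rw [EuclideanSpace.dist_eq, EuclideanSpace.dist_eq]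
  rw [Real.sq_sqrt (by positivity), Real.sq_sqrt (by positivity)]




-- quadratic lower bound lemma
lemma quad_lower (c d σ σ' p g : ℝ) (hc : 0 ≤ c) (hd : 0 ≤ d) (hσ : 0 ≤ σ) (hσ' : 0 ≤ σ')
    (hp : 0 ≤ p) (hg : 0 ≤ g) (hp1 : d - c * σ ≤ p) (hg1 : d - c * σ' ≤ g) :
    d ^ 2 ≤ p ^ 2 + g ^ 2 + (c ^ 2 / 2) * (σ + σ') ^ 2 := by
  rcases le_or_gt (d - c * σ) 0 with h1 | h1
  · rcases le_or_gt (d - c * σ') 0 with h2 | h2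
    · nlinarith [sq_nonneg p, sq_nonneg g, sq_nonneg (c * σ + c * σ' - 2 * d),
        sq_nonneg (c * σ - c * σ')]
    · have hg2 : (d - c * σ') ^ 2 ≤ g ^ 2 := by nlinarith
      have hs' : 0 ≤ c * σ' := mul_nonneg hc hσ'
      have hds : d + c * σ' ≤ c * σ + c * σ' := by linarith
      have hsq : (d + c * σ') ^ 2 ≤ (c * σ + c * σ') ^ 2 := by
        nlinarith [mul_self_le_mul_self (by linarith : (0:ℝ) ≤ d + c * σ') hds]
      nlinarith [sq_nonneg p, sq_nonneg (d - c * σ'), sq_nonneg (c * σ')]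
  · rcases le_or_gt (d - c * σ') 0 with h2 | h2
    · have hp2 : (d - c * σ) ^ 2 ≤ p ^ 2 := by nlinarith
      have hs : 0 ≤ c * σ := mul_nonneg hc hσ
      have hds : d + c * σ ≤ c * σ + c * σ' := by linarith
      have hsq : (d + c * σ) ^ 2 ≤ (c * σ + c * σ') ^ 2 := by
        nlinarith [mul_self_le_mul_self (by linarith : (0:ℝ) ≤ d + c * σ) hds]
      nlinarith [sq_nonneg g, sq_nonneg (d - c * σ), sq_nonneg (c * σ)]
    · have hp2 : (d - c * σ) ^ 2 ≤ p ^ 2 := by nlinarith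
      have hg2 : (d - c * σ') ^ 2 ≤ g ^ 2 := by nlinarith
      nlinarith [sq_nonneg (d - c * σ - c * σ'), sq_nonneg (c * σ - c * σ')]

-- numeric inequality for same-side pairs
lemma numUA (u v : ℝ) (hu : 1 ≤ u) (hv : 1 ≤ v) :
    u ^ 2 + ((1311/200) * v * u) ^ 2 + (191/100 + (437/150) * (u * v)) ^ 2 / 2
      ≤ (7 * u * v + 2 * (u + v)) ^ 2 := by
  have hP1 : 1 ≤ u * v := by nlinarith
  have huP : u ≤ u * v := by nlinarith
  have hu0 : (0:ℝ) ≤ u := by linarith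
  have hK : (0:ℝ) ≤ u * v := by nlinarith
  nlinarith [mul_self_le_mul_self hu0 huP, mul_nonneg hK (show (0:ℝ) ≤ u + v - 2 by linarith),
    mul_self_le_mul_self (show (0:ℝ) ≤ 2 by norm_num) (show (2:ℝ) ≤ u + v by linarith),
    mul_self_le_mul_self (show (0:ℝ) ≤ 1 by norm_num) hP1, sq_nonneg (u * v - 1)]

-- numeric inequality for cross pairs
lemma numUX (u v : ℝ) (hu : 1 ≤ u) (hv : 1 ≤ v) :
    ((437/150) * (u * v) + (871/300) * u) ^ 2 + ((437/150) * (u * v) + (871/300) * v) ^ 2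
      + 2 * (191/100 + (437/150) * (u * v)) ^ 2
      ≤ (7 * u * v + 2 * (u + v)) ^ 2 := by
  have hP1 : 1 ≤ u * v := by nlinarith
  nlinarith [mul_nonneg (mul_nonneg (sq_nonneg u) (show (0:ℝ) ≤ v - 1 by linarith)) (show (0:ℝ) ≤ 1 by norm_num),
    mul_nonneg (sq_nonneg u) (show (0:ℝ) ≤ v - 1 by linarith),
    mul_nonneg (sq_nonneg v) (show (0:ℝ) ≤ u - 1 by linarith),
    sq_nonneg (u - v), sq_nonneg (u * v - 1), hP1]


set_option maxHeartbeats 1000000 in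
theorem side_extension {X : Type*} [MetricSpace X]
    {Fa Fb : Type*} [NormedAddCommGroup Fa] [InnerProductSpace ℝ Fa]
    [NormedAddCommGroup Fb] [InnerProductSpace ℝ Fb] [FiniteDimensional ℝ Fb]
    (A B : Set X) (hB : IsClosed B) (hBne : B.Nonempty)
    (DA DB : ℝ) (hDA : 1 ≤ DA) (hDB : 1 ≤ DB)
    (φA : X → Fa)
    (hφA : ∀ x ∈ A, ∀ y ∈ A,
      dist x y ≤ dist (φA x) (φA y) ∧ dist (φA x) (φA y) ≤ DA * dist x y)
    (φB : X → Fb)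
    (hφB : ∀ x ∈ B, ∀ y ∈ B,
      dist x y ≤ dist (φB x) (φB y) ∧ dist (φB x) (φB y) ≤ DB * dist x y) :
    ∃ g : X → Fb,
      (∀ u v : X, dist (g u) (g v) ≤ (1311/200) * DB * dist (φA u) (φA v)) ∧
      (∀ u ∈ A, ∀ y ∈ B, dist (g u) (φB y)
        ≤ ((437/150) * (DA * DB) + (871/300) * DB) * dist u y) ∧
      (∀ u ∈ A, ∀ y ∈ B, dist u y - ((191/100) + (437/150) * (DA * DB)) * Metric.infDist u B
        ≤ dist (g u) (φB y)) := by
  classical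
  set ρ : X → ℝ := fun x => Metric.infDist x B with hρ
  have hρ0 : ∀ x, 0 ≤ ρ x := fun x => Metric.infDist_nonneg
  have hρlip : ∀ x y : X, ρ x ≤ ρ y + dist x y := fun x y =>
    Metric.infDist_le_infDist_add_dist
  -- near-point choice
  have hq : ∀ x : X, ∃ y, y ∈ B ∧ dist x y ≤ (101/100) * ρ x := by
    intro x
    rcases eq_or_lt_of_le (hρ0 x) with h0 | h0
    · have hxB : x ∈ B := (hB.mem_iff_infDist_zero hBne).mpr h0.symm
      exact ⟨x, hxB, by simp only [dist_self]; nlinarith [hρ0 x]⟩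
    · have : Metric.infDist x B < (101/100) * ρ x := by
        rw [hρ]; nlinarith
      obtain ⟨y, hyB, hy⟩ := (Metric.infDist_lt_iff hBne).mp this
      exact ⟨y, hyB, hy.le⟩
  choose q hqB hqd using hq
  -- maximal separated subset of A
  set P : Set (Set X) := {S | S ⊆ A ∧ ∀ s ∈ S, ∀ t ∈ S, s ≠ t →
    (2/11) * (ρ s + ρ t) ≤ dist s t} with hP
  have hchains : ∀ c ⊆ P, IsChain (· ⊆ ·) c → c.Nonempty →
      ∃ ub ∈ P, ∀ s ∈ c, s ⊆ ub := by
    intro c hcP hchain _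
    refine ⟨⋃₀ c, ⟨?_, ?_⟩, fun s hs => Set.subset_sUnion_of_mem hs⟩
    · intro x hx
      obtain ⟨s, hsc, hxs⟩ := Set.mem_sUnion.mp hx
      exact (hcP hsc).1 hxs
    · intro s hs t ht hst
      obtain ⟨c1, hc1, hs1⟩ := Set.mem_sUnion.mp hs
      obtain ⟨c2, hc2, ht2⟩ := Set.mem_sUnion.mp ht
      rcases hchain.total hc1 hc2 with h | h
      · exact (hcP hc2).2 s (h hs1) t ht2 hst
      · exact (hcP hc1).2 s hs1 t (h ht2) hst
  have hemp : (∅ : Set X) ∈ P := ⟨empty_subset _, by simp⟩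
  obtain ⟨S, -, hSmax⟩ := zorn_subset_nonempty P hchains ∅ hemp
  have hSsub : S ⊆ A := hSmax.1.1
  have hSsep := hSmax.1.2
  -- neighbor lemma
  have hnb : ∀ u ∈ A, ∃ s ∈ S, dist u s ≤ (4/9) * ρ u ∧ ρ s ≤ (13/9) * ρ u := by
    intro u hu
    by_cases huS : u ∈ S
    · exact ⟨u, huS, by simp only [dist_self]; nlinarith [hρ0 u], by nlinarith [hρ0 u]⟩
    · have hex : ∃ s ∈ S, dist u s < (2/11) * (ρ u + ρ s) := by
        by_contra hc
        push_neg at hc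
        have hins : insert u S ∈ P := by
          refine ⟨insert_subset hu hSsub, ?_⟩
          intro s hs t ht hst
          rcases Set.mem_insert_iff.mp hs with rfl | hsS
          · rcases Set.mem_insert_iff.mp ht with rfl | htS
            · exact absurd rfl hst
            · exact hc t htS
          · rcases Set.mem_insert_iff.mp ht with rfl | htS
            · rw [dist_comm, add_comm]
              exact hc s hsS
            · exact hSsep s hsS t htS hst
        have := hSmax.2 hins (Set.subset_insert _ _)
        exact huS (this (Set.mem_insert _ _))
      obtain ⟨s, hsS, hd⟩ := hex
      have h1 : ρ s ≤ ρ u + dist s u := hρlip s u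
      rw [dist_comm] at h1
      have h2 : ρ s ≤ (13/9) * ρ u := by nlinarith
      exact ⟨s, hsS, by nlinarith, h2⟩
  -- Kirszbraun extension
  set L : ℝ := (1311/200) * DB with hL
  have hL0 : 0 ≤ L := by positivity
  set M : Set (Fa × Fb) := (fun s => (φA s, φB (q s))) '' S with hM
  have hMpairs : ∀ p ∈ M, ∀ p' ∈ M, ‖p.2 - p'.2‖ ≤ L * ‖p.1 - p'.1‖ := by
    rintro _ ⟨s, hs, rfl⟩ _ ⟨s', hs', rfl⟩
    simp only
    rw [← dist_eq_norm, ← dist_eq_norm]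
    by_cases hss : s = s'
    · subst hss; simp
    · have hd1 : dist (φB (q s)) (φB (q s')) ≤ DB * dist (q s) (q s') :=
        (hφB _ (hqB s) _ (hqB s')).2
      have hd2 : dist (q s) (q s') ≤ dist s (q s) + dist s s' + dist s' (q s') := by
        have a1 := dist_triangle (q s) s (q s')
        have a2 := dist_triangle s s' (q s')
        have a3 : dist (q s) s = dist s (q s) := dist_comm _ _
        have a4 : dist s' (q s') = dist (q s') s' := dist_comm _ _
        have a5 : dist s' (q s') = dist (s') (q s') := rfl
        linarith [dist_comm s' (q s')]
      have hd3 : dist s (q s) ≤ (101/100) * ρ s := hqd s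
      have hd4 : dist s' (q s') ≤ (101/100) * ρ s' := hqd s'
      have hsep : (2/11) * (ρ s + ρ s') ≤ dist s s' := hSsep s hs s' hs' hss
      have hda : dist s s' ≤ dist (φA s) (φA s') := (hφA s (hSsub hs) s' (hSsub hs')).1
      have m1 : dist (q s) (q s') ≤ (1311/200) * dist s s' := by linarith
      have m2 : DB * dist (q s) (q s') ≤ DB * ((1311/200) * dist s s') :=
        mul_le_mul_of_nonneg_left m1 (by linarith)
      have m3 : DB * ((1311/200) * dist s s') ≤ DB * ((1311/200) * dist (φA s) (φA s')) := by
        have h0 : (0:ℝ) ≤ DB * (1311/200) := by positivity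
        nlinarith
      have hd1 : dist (φB (q s)) (φB (q s')) ≤ DB * dist (q s) (q s') :=
        (hφB _ (hqB s) _ (hqB s')).2
      rw [hL]
      linarith
  obtain ⟨Eg, hEg1, hEg2⟩ := kirszbraun_graph L hL0 M hMpairs
  set g : X → Fb := fun x => Eg (φA x) with hg
  have hanchor : ∀ s ∈ S, g s = φB (q s) := by
    intro s hs
    exact hEg1 (φA s, φB (q s)) ⟨s, hs, rfl⟩
  have hglip : ∀ u v : X, dist (g u) (g v) ≤ L * dist (φA u) (φA v) := by
    intro u v
    rw [dist_eq_norm, dist_eq_norm]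
    exact hEg2 _ _
  refine ⟨g, hglip, ?_, ?_⟩
  · -- fidelity upper bound
    intro u hu y hy
    obtain ⟨s, hsS, hd1, hd2⟩ := hnb u hu
    have hρd : ρ u ≤ dist u y := Metric.infDist_le_dist_of_mem hy
    have t1 : dist (g u) (φB y) ≤ dist (g u) (g s) + dist (g s) (φB y) :=
      dist_triangle _ _ _
    have t2 : dist (g u) (g s) ≤ ((1311/200) * DB) * (DA * dist u s) := by
      have h1 := hglip u s
      rw [hL] at h1
      have h2 : dist (φA u) (φA s) ≤ DA * dist u s := (hφA u hu s (hSsub hsS)).2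
      nlinarith [mul_le_mul_of_nonneg_left h2 (show (0:ℝ) ≤ (1311/200) * DB by positivity)]
    have t3 : dist (g s) (φB y) ≤ DB * dist (q s) y := by
      rw [hanchor s hsS]
      exact (hφB _ (hqB s) y hy).2
    have t4 : dist (q s) y ≤ dist s (q s) + dist u s + dist u y := by
      have a1 := dist_triangle (q s) s y
      have a2 := dist_triangle s u y
      have a3 : dist (q s) s = dist s (q s) := dist_comm _ _
      have a4 : dist s u = dist u s := dist_comm _ _
      linarith
    have hqd2 : dist s (q s) ≤ (1313/900) * ρ u := by
      have := hqd s
      nlinarith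
    have c1 : dist (g u) (g s) ≤ (437/150) * (DA * DB) * ρ u := by
      have h3 : ((1311/200) * DB) * (DA * dist u s) ≤ ((1311/200) * DB) * (DA * ((4/9) * ρ u)) := by
        have hLA : (0:ℝ) ≤ ((1311/200) * DB) * DA := by positivity
        nlinarith
      nlinarith [t2]
    have c2 : dist (q s) y ≤ (1713/900) * ρ u + dist u y := by linarith
    have c3 : dist (g s) (φB y) ≤ DB * ((1713/900) * ρ u + dist u y) := by
      have := mul_le_mul_of_nonneg_left c2 (show (0:ℝ) ≤ DB by linarith)
      linarith [t3]
    have c4 : (437/150) * (DA * DB) * ρ u ≤ (437/150) * (DA * DB) * dist u y := by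
      have : (0:ℝ) ≤ (437/150) * (DA * DB) := by positivity
      nlinarith
    have c5 : DB * ((1713/900) * ρ u) ≤ DB * ((1713/900) * dist u y) := by
      have : (0:ℝ) ≤ DB * (1713/900) := by positivity
      nlinarith
    nlinarith [t1]
  · -- lower bound
    intro u hu y hy
    obtain ⟨s, hsS, hd1, hd2⟩ := hnb u hu
    have hρd : ρ u ≤ dist u y := Metric.infDist_le_dist_of_mem hy
    have l1 : dist (q s) y ≤ dist (g s) (φB y) := by
      rw [hanchor s hsS]
      exact (hφB _ (hqB s) y hy).1
    have l2 : dist (g s) (φB y) ≤ dist (g s) (g u) + dist (g u) (φB y) :=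
      dist_triangle _ _ _
    have l3 : dist (g s) (g u) ≤ (437/150) * (DA * DB) * ρ u := by
      have t2 : dist (g s) (g u) ≤ ((1311/200) * DB) * dist (φA s) (φA u) := by
        have h1 := hglip s u
        rwa [hL] at h1
      have h2 : dist (φA s) (φA u) ≤ DA * dist u s := by
        have := (hφA s (hSsub hsS) u hu).2
        rwa [dist_comm s u] at this
      have h3 : ((1311/200) * DB) * dist (φA s) (φA u) ≤ ((1311/200) * DB) * (DA * ((4/9) * ρ u)) := by
        have hLA : (0:ℝ) ≤ (1311/200) * DB := by positivity
        have hDA0 : (0:ℝ) ≤ DA := by linarith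
        nlinarith [mul_le_mul_of_nonneg_left h2 hLA,
          mul_le_mul_of_nonneg_left hd1 (mul_nonneg hLA hDA0)]
      nlinarith
    have hqd2 : dist s (q s) ≤ (1313/900) * ρ u := by
      have := hqd s
      nlinarith
    have l4 : dist u y ≤ dist u s + dist s (q s) + dist (q s) y := by
      have a1 := dist_triangle u s y
      have a2 := dist_triangle s (q s) y
      linarith
    have hρρ : (0:ℝ) ≤ ρ u := hρ0 u
    have hiρ : Metric.infDist u B = ρ u := rfl
    rw [hiρ]
    linarith



lemma le_sqrt3_of_sq (x S : ℝ) (hx : 0 ≤ x) (h : x ^ 2 ≤ S) : x ≤ Real.sqrt S :=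
  calc x = Real.sqrt (x ^ 2) := (Real.sqrt_sq hx).symm
    _ ≤ _ := Real.sqrt_le_sqrt h

lemma le_sqrt3_1 (dp dq dr : ℝ) (h : 0 ≤ dp) : dp ≤ Real.sqrt (dp ^ 2 + dq ^ 2 + dr ^ 2) :=
  le_sqrt3_of_sq _ _ h (by nlinarith [sq_nonneg dq, sq_nonneg dr])

lemma le_sqrt3_2 (dp dq dr : ℝ) (h : 0 ≤ dq) : dq ≤ Real.sqrt (dp ^ 2 + dq ^ 2 + dr ^ 2) :=
  le_sqrt3_of_sq _ _ h (by nlinarith [sq_nonneg dp, sq_nonneg dr])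

lemma sqrt3_le_mul (dp dq dr c1 c2 c3 d K : ℝ) (h1 : dp ≤ c1 * d) (h2 : dq ≤ c2 * d)
    (h3 : |dr| ≤ c3 * d) (hdp : 0 ≤ dp) (hdq : 0 ≤ dq) (hd : 0 ≤ d) (hK : 0 ≤ K)
    (hc : c1 ^ 2 + c2 ^ 2 + c3 ^ 2 ≤ K ^ 2) :
    Real.sqrt (dp ^ 2 + dq ^ 2 + dr ^ 2) ≤ K * d := by
  have e1 : dp ^ 2 ≤ (c1 * d) ^ 2 := by nlinarith
  have e2 : dq ^ 2 ≤ (c2 * d) ^ 2 := by nlinarith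
  have e3 : dr ^ 2 ≤ (c3 * d) ^ 2 := by nlinarith [sq_abs dr, abs_nonneg dr]
  have hS : dp ^ 2 + dq ^ 2 + dr ^ 2 ≤ (K * d) ^ 2 := by
    nlinarith [mul_le_mul_of_nonneg_right hc (sq_nonneg d)]
  calc Real.sqrt (dp ^ 2 + dq ^ 2 + dr ^ 2) ≤ Real.sqrt ((K * d) ^ 2) :=
        Real.sqrt_le_sqrt hS
    _ = K * d := Real.sqrt_sq (mul_nonneg hK hd)

lemma infDist_abs_sub_le {X : Type*} [MetricSpace X] (s : Set X) (x y : X) :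
    |Metric.infDist x s - Metric.infDist y s| ≤ dist x y := by
  rw [abs_sub_le_iff]
  constructor
  · linarith [Metric.infDist_le_infDist_add_dist (x := x) (y := y) (s := s)]
  · linarith [Metric.infDist_le_infDist_add_dist (x := y) (y := x) (s := s),
      dist_comm x y]

set_option maxHeartbeats 2000000 in
/-- The "furthermore" clause of the main theorem: given non-contracting embeddings
`φ_A : A → ℝ^a` and `φ_B : B → ℝ^b` with `‖φ_A‖_Lip ≤ D_A` and `‖φ_B‖_Lip ≤ D_B`,
there is a non-contracting embedding `Ψ : X → ℝ^(a+b+1)` with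
`‖Ψ‖_Lip ≤ 7·D_A·D_B + 2·(D_A + D_B)` that moreover dominates `φ_A` on `A` and
`φ_B` on `B`. -/
theorem union_of_euclidean_noncontracting_embedding
    {X : Type*} [MetricSpace X] (A B : Set X) (hAB : A ∪ B = Set.univ)
    (a b : ℕ) (DA DB : ℝ) (hDA : 1 ≤ DA) (hDB : 1 ≤ DB)
    (φA : X → EuclideanSpace ℝ (Fin a))
    (hφA : ∀ x ∈ A, ∀ y ∈ A,
      dist x y ≤ dist (φA x) (φA y) ∧ dist (φA x) (φA y) ≤ DA * dist x y)
    (φB : X → EuclideanSpace ℝ (Fin b))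
    (hφB : ∀ x ∈ B, ∀ y ∈ B,
      dist x y ≤ dist (φB x) (φB y) ∧ dist (φB x) (φB y) ≤ DB * dist x y) :
    ∃ Ψ : X → EuclideanSpace ℝ (Fin (a + b + 1)),
      (∀ x y : X, dist x y ≤ dist (Ψ x) (Ψ y)) ∧
      (∀ x y : X, dist (Ψ x) (Ψ y) ≤ (7 * DA * DB + 2 * (DA + DB)) * dist x y) ∧
      (∀ u ∈ A, ∀ v ∈ A, dist (φA u) (φA v) ≤ dist (Ψ u) (Ψ v)) ∧
      (∀ u ∈ B, ∀ v ∈ B, dist (φB u) (φB v) ≤ dist (Ψ u) (Ψ v)) := by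
  classical
  have hK0 : (0:ℝ) ≤ 7 * DA * DB + 2 * (DA + DB) := by nlinarith
  -- trivial case : A empty
  by_cases hAne : A.Nonempty
  swap
  · rw [Set.not_nonempty_iff_eq_empty] at hAne
    have hBuniv : ∀ x : X, x ∈ B := by
      intro x
      have hx : x ∈ A ∪ B := hAB ▸ Set.mem_univ x
      rcases hx with h | h
      · exact absurd (hAne ▸ h) (Set.notMem_empty x)
      · exact h
    refine ⟨fun x => pack a b 0 (φB x) 0, ?_, ?_, ?_, ?_⟩
    · intro x y
      rw [pack_dist]
      exact le_trans (hφB x (hBuniv x) y (hBuniv y)).1 (le_sqrt3_2 _ _ _ dist_nonneg)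
    · intro x y
      rw [pack_dist]
      refine sqrt3_le_mul _ _ _ 0 DB 0 _ _ (by simp) ((hφB x (hBuniv x) y (hBuniv y)).2)
        (by simp [dist_nonneg]) dist_nonneg dist_nonneg dist_nonneg hK0 ?_
      nlinarith [mul_self_le_mul_self (by linarith : (0:ℝ) ≤ DB)
        (show DB ≤ 7 * DA * DB + 2 * (DA + DB) by nlinarith)]
    · intro u hu
      exact absurd (hAne ▸ hu) (Set.notMem_empty u)
    · intro u _ v _
      rw [pack_dist]
      exact le_sqrt3_2 _ _ _ dist_nonneg
  by_cases hBne : B.Nonempty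
  swap
  · rw [Set.not_nonempty_iff_eq_empty] at hBne
    have hAuniv : ∀ x : X, x ∈ A := by
      intro x
      have hx : x ∈ A ∪ B := hAB ▸ Set.mem_univ x
      rcases hx with h | h
      · exact h
      · exact absurd (hBne ▸ h) (Set.notMem_empty x)
    refine ⟨fun x => pack a b (φA x) 0 0, ?_, ?_, ?_, ?_⟩
    · intro x y
      rw [pack_dist]
      exact le_trans (hφA x (hAuniv x) y (hAuniv y)).1 (le_sqrt3_1 _ _ _ dist_nonneg)
    · intro x y
      rw [pack_dist]
      refine sqrt3_le_mul _ _ _ DA 0 0 _ _ ((hφA x (hAuniv x) y (hAuniv y)).2)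
        (by simp [dist_nonneg]) (by simp [dist_nonneg]) dist_nonneg dist_nonneg
        dist_nonneg hK0 ?_
      nlinarith [mul_self_le_mul_self (by linarith : (0:ℝ) ≤ DA)
        (show DA ≤ 7 * DA * DB + 2 * (DA + DB) by nlinarith)]
    · intro u _ v _
      rw [pack_dist]
      exact le_sqrt3_1 _ _ _ dist_nonneg
    · intro u hu
      exact absurd (hBne ▸ hu) (Set.notMem_empty u)
  -- main case
  set A' := closure A with hA'
  set B' := closure B with hB'
  have hA'ne : A'.Nonempty := hAne.closure
  have hB'ne : B'.Nonempty := hBne.closure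
  have hdichot : ∀ x : X, x ∈ A' ∨ x ∈ B' := by
    intro x
    have hx : x ∈ A ∪ B := hAB ▸ Set.mem_univ x
    rcases hx with h | h
    · exact Or.inl (subset_closure h)
    · exact Or.inr (subset_closure h)
  obtain ⟨ψA, hψAeq, hψA⟩ := extend_to_closure φA A DA (by linarith) hφA
  obtain ⟨ψB, hψBeq, hψB⟩ := extend_to_closure φB B DB (by linarith) hφB
  obtain ⟨g, hg1, hg2, hg3⟩ := side_extension A' B' isClosed_closure hB'ne DA DB hDA hDB
    ψA hψA ψB hψB
  obtain ⟨f, hf1, hf2, hf3⟩ := side_extension B' A' isClosed_closure hA'ne DB DA hDB hDA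
    ψB hψB ψA hψA
  set cs : ℝ := 191/100 + (437/150) * (DA * DB) with hcs
  have hcs0 : 0 ≤ cs := by rw [hcs]; nlinarith
  set t : ℝ := cs / Real.sqrt 2 with ht
  have ht0 : 0 ≤ t := by
    rw [ht]
    positivity
  have ht2 : t ^ 2 = cs ^ 2 / 2 := by
    rw [ht, div_pow, Real.sq_sqrt (by norm_num : (2:ℝ) ≥ 0)]
  set Fc : X → EuclideanSpace ℝ (Fin a) := fun x => if x ∈ A' then ψA x else f x with hFc
  set Gc : X → EuclideanSpace ℝ (Fin b) := fun x => if x ∈ B' then ψB x else g x with hGc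
  set hh : X → ℝ := fun x => t * (Metric.infDist x A' - Metric.infDist x B') with hhh
  set Ψ : X → EuclideanSpace ℝ (Fin (a + b + 1)) := fun x => pack a b (Fc x) (Gc x) (hh x)
    with hΨ
  have hΨdist : ∀ x y : X, dist (Ψ x) (Ψ y)
      = Real.sqrt (dist (Fc x) (Fc y) ^ 2 + dist (Gc x) (Gc y) ^ 2 + (hh x - hh y) ^ 2) := by
    intro x y
    rw [hΨ]
    exact pack_dist a b _ _ _ _ _ _
  -- component bounds for same-side pairs
  have HFA : ∀ x ∈ A', ∀ y ∈ A', dist (Fc x) (Fc y) = dist (ψA x) (ψA y) := by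
    intro x hx y hy
    rw [hFc]
    simp only [if_pos hx, if_pos hy]
  have HGB : ∀ x ∈ B', ∀ y ∈ B', dist (Gc x) (Gc y) = dist (ψB x) (ψB y) := by
    intro x hx y hy
    rw [hGc]
    simp only [if_pos hx, if_pos hy]
  have HGA : ∀ x ∈ A', ∀ y ∈ A', dist (Gc x) (Gc y) ≤ (1311/200) * DB * DA * dist x y := by
    intro x hx y hy
    have hfid : ∀ u ∈ A', ∀ w ∈ B', dist (g u) (ψB w) ≤ (1311/200) * DB * DA * dist u w := by
      intro u hu w hw
      have h1 := hg2 u hu w hw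
      have h2 : (437/150) * (DA * DB) + (871/300) * DB ≤ (1311/200) * DB * DA := by
        nlinarith [(show DB ≤ DA * DB by nlinarith)]
      nlinarith [dist_nonneg (x := u) (y := w)]
    by_cases hxB : x ∈ B'
    · by_cases hyB : y ∈ B'
      · rw [HGB x hxB y hyB]
        have h1 := (hψB x hxB y hyB).2
        have h2 := le_mul_of_one_le_left
          (mul_nonneg (by linarith : (0:ℝ) ≤ DB) (dist_nonneg (x := x) (y := y)))
          (show (1:ℝ) ≤ (1311/200) * DA by nlinarith)
        nlinarith [h1, h2]
      · have hGx : Gc x = ψB x := by rw [hGc]; simp only [if_pos hxB]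
        have hGy : Gc y = g y := by rw [hGc]; simp only [if_neg hyB]
        rw [hGx, hGy, dist_comm]
        have := hfid y hy x hxB
        rwa [dist_comm y x] at this
    · have hGx : Gc x = g x := by rw [hGc]; simp only [if_neg hxB]
      by_cases hyB : y ∈ B'
      · have hGy : Gc y = ψB y := by rw [hGc]; simp only [if_pos hyB]
        rw [hGx, hGy]
        exact hfid x hx y hyB
      · have hGy : Gc y = g y := by rw [hGc]; simp only [if_neg hyB]
        rw [hGx, hGy]
        have h1 := hg1 x y
        have h2 := (hψA x hx y hy).2
        nlinarith [dist_nonneg (x := ψA x) (y := ψA y)]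
  have HFB : ∀ x ∈ B', ∀ y ∈ B', dist (Fc x) (Fc y) ≤ (1311/200) * DA * DB * dist x y := by
    intro x hx y hy
    have hfid : ∀ u ∈ B', ∀ w ∈ A', dist (f u) (ψA w) ≤ (1311/200) * DA * DB * dist u w := by
      intro u hu w hw
      have h1 := hf2 u hu w hw
      have h2 : (437/150) * (DB * DA) + (871/300) * DA ≤ (1311/200) * DA * DB := by
        nlinarith [(show DA ≤ DA * DB by nlinarith)]
      nlinarith [dist_nonneg (x := u) (y := w)]
    by_cases hxA : x ∈ A'
    · by_cases hyA : y ∈ A'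
      · rw [HFA x hxA y hyA]
        have h1 := (hψA x hxA y hyA).2
        have h2 := le_mul_of_one_le_left
          (mul_nonneg (by linarith : (0:ℝ) ≤ DA) (dist_nonneg (x := x) (y := y)))
          (show (1:ℝ) ≤ (1311/200) * DB by nlinarith)
        nlinarith [h1, h2]
      · have hFx : Fc x = ψA x := by rw [hFc]; simp only [if_pos hxA]
        have hFy : Fc y = f y := by rw [hFc]; simp only [if_neg hyA]
        rw [hFx, hFy, dist_comm]
        have := hfid y hy x hxA
        rwa [dist_comm y x] at this
    · have hFx : Fc x = f x := by rw [hFc]; simp only [if_neg hxA]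
      by_cases hyA : y ∈ A'
      · have hFy : Fc y = ψA y := by rw [hFc]; simp only [if_pos hyA]
        rw [hFx, hFy]
        exact hfid x hx y hyA
      · have hFy : Fc y = f y := by rw [hFc]; simp only [if_neg hyA]
        rw [hFx, hFy]
        have h1 := hf1 x y
        have h2 := (hψB x hx y hy).2
        nlinarith [dist_nonneg (x := ψB x) (y := ψB y)]
  -- h component : Lipschitz
  have Hh2 : ∀ x y : X, |hh x - hh y| ≤ 2 * t * dist x y := by
    intro x y
    rw [hhh]
    have e1 := infDist_abs_sub_le A' x y
    have e2 := infDist_abs_sub_le B' x y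
    have : t * (Metric.infDist x A' - Metric.infDist x B')
        - t * (Metric.infDist y A' - Metric.infDist y B')
        = t * ((Metric.infDist x A' - Metric.infDist y A')
          - (Metric.infDist x B' - Metric.infDist y B')) := by ring
    rw [this, abs_mul, abs_of_nonneg ht0]
    have h3 : |(Metric.infDist x A' - Metric.infDist y A')
        - (Metric.infDist x B' - Metric.infDist y B')| ≤ 2 * dist x y := by
      have := abs_sub (Metric.infDist x A' - Metric.infDist y A')
        (Metric.infDist x B' - Metric.infDist y B')
      calc |(Metric.infDist x A' - Metric.infDist y A')
          - (Metric.infDist x B' - Metric.infDist y B')|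
          ≤ |Metric.infDist x A' - Metric.infDist y A'|
            + |Metric.infDist x B' - Metric.infDist y B'| := abs_sub _ _
        _ ≤ 2 * dist x y := by linarith
    nlinarith [abs_nonneg ((Metric.infDist x A' - Metric.infDist y A')
      - (Metric.infDist x B' - Metric.infDist y B'))]
  have HhA : ∀ x ∈ A', ∀ y ∈ A', |hh x - hh y| ≤ t * dist x y := by
    intro x hx y hy
    rw [hhh]
    have hx0 : Metric.infDist x A' = 0 := Metric.infDist_zero_of_mem hx
    have hy0 : Metric.infDist y A' = 0 := Metric.infDist_zero_of_mem hy
    have e2 := infDist_abs_sub_le B' x y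
    have : t * (Metric.infDist x A' - Metric.infDist x B')
        - t * (Metric.infDist y A' - Metric.infDist y B')
        = t * (Metric.infDist y B' - Metric.infDist x B') := by
      rw [hx0, hy0]; ring
    rw [this, abs_mul, abs_of_nonneg ht0]
    have e3 : |Metric.infDist y B' - Metric.infDist x B'| ≤ dist x y := by
      rw [abs_sub_comm]
      exact e2
    nlinarith
  have HhB : ∀ x ∈ B', ∀ y ∈ B', |hh x - hh y| ≤ t * dist x y := by
    intro x hx y hy
    rw [hhh]
    have hx0 : Metric.infDist x B' = 0 := Metric.infDist_zero_of_mem hx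
    have hy0 : Metric.infDist y B' = 0 := Metric.infDist_zero_of_mem hy
    have e2 := infDist_abs_sub_le A' x y
    have : t * (Metric.infDist x A' - Metric.infDist x B')
        - t * (Metric.infDist y A' - Metric.infDist y B')
        = t * (Metric.infDist x A' - Metric.infDist y A') := by
      rw [hx0, hy0]; ring
    rw [this, abs_mul, abs_of_nonneg ht0]
    nlinarith
  -- numeric facts
  have hnumA : DA ^ 2 + ((1311/200) * DB * DA) ^ 2 + t ^ 2
      ≤ (7 * DA * DB + 2 * (DA + DB)) ^ 2 := by
    have := numUA DA DB hDA hDB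
    rw [ht2, hcs]
    nlinarith
  have hnumB : ((1311/200) * DA * DB) ^ 2 + DB ^ 2 + t ^ 2
      ≤ (7 * DA * DB + 2 * (DA + DB)) ^ 2 := by
    have := numUA DB DA hDB hDA
    rw [ht2, hcs]
    nlinarith
  have hnumX : ((437/150) * (DB * DA) + (871/300) * DA) ^ 2
      + ((437/150) * (DA * DB) + (871/300) * DB) ^ 2 + (2 * t) ^ 2
      ≤ (7 * DA * DB + 2 * (DA + DB)) ^ 2 := by
    have := numUX DA DB hDA hDB
    have h4t : (2 * t) ^ 2 = 2 * cs ^ 2 := by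
      have : (2 * t) ^ 2 = 4 * t ^ 2 := by ring
      rw [this, ht2]; ring
    rw [h4t, hcs]
    nlinarith
  -- cross-pair estimates (x ∈ A' \ B', y ∈ B' \ A')
  have Hcross_low : ∀ x, x ∈ A' → x ∉ B' → ∀ y, y ∈ B' → y ∉ A' →
      dist x y ≤ dist (Ψ x) (Ψ y) := by
    intro x hxA hxB y hyB hyA
    set σ := Metric.infDist y A' with hσdef
    set σ' := Metric.infDist x B' with hσ'def
    have hσ0 : 0 ≤ σ := Metric.infDist_nonneg
    have hσ'0 : 0 ≤ σ' := Metric.infDist_nonneg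
    have hFx : Fc x = ψA x := by rw [hFc]; simp only [if_pos hxA]
    have hFy : Fc y = f y := by rw [hFc]; simp only [if_neg hyA]
    have hGx : Gc x = g x := by rw [hGc]; simp only [if_neg hxB]
    have hGy : Gc y = ψB y := by rw [hGc]; simp only [if_pos hyB]
    have hplow : dist x y - cs * σ ≤ dist (Fc x) (Fc y) := by
      rw [hFx, hFy, dist_comm (ψA x) (f y)]
      have h := hf3 y hyB x hxA
      rw [dist_comm y x] at h
      have hc2 : (191/100 + (437/150) * (DB * DA)) = cs := by rw [hcs]; ring
      rw [hc2, ← hσdef] at h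
      exact h
    have hglow : dist x y - cs * σ' ≤ dist (Gc x) (Gc y) := by
      rw [hGx, hGy]
      have h := hg3 x hxA y hyB
      rwa [← hσ'def] at h
    have hhval : (hh x - hh y) ^ 2 = (cs ^ 2 / 2) * (σ + σ') ^ 2 := by
      rw [hhh]
      have hx0 : Metric.infDist x A' = 0 := Metric.infDist_zero_of_mem hxA
      have hy0 : Metric.infDist y B' = 0 := Metric.infDist_zero_of_mem hyB
      have e : t * (Metric.infDist x A' - Metric.infDist x B')
          - t * (Metric.infDist y A' - Metric.infDist y B')
          = -(t * (σ + σ')) := by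
        rw [hx0, hy0, hσdef, hσ'def]; ring
      rw [e]
      linear_combination (σ + σ') ^ 2 * ht2
    rw [hΨdist]
    apply le_sqrt3_of_sq _ _ dist_nonneg
    rw [hhval]
    exact quad_lower cs (dist x y) σ σ' _ _ hcs0 dist_nonneg hσ0 hσ'0
      dist_nonneg dist_nonneg hplow hglow
  have Hcross_lip : ∀ x, x ∈ A' → x ∉ B' → ∀ y, y ∈ B' → y ∉ A' →
      dist (Ψ x) (Ψ y) ≤ (7 * DA * DB + 2 * (DA + DB)) * dist x y := by
    intro x hxA hxB y hyB hyA
    have hFx : Fc x = ψA x := by rw [hFc]; simp only [if_pos hxA]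
    have hFy : Fc y = f y := by rw [hFc]; simp only [if_neg hyA]
    have hGx : Gc x = g x := by rw [hGc]; simp only [if_neg hxB]
    have hGy : Gc y = ψB y := by rw [hGc]; simp only [if_pos hyB]
    have hFup : dist (Fc x) (Fc y) ≤ ((437/150) * (DB * DA) + (871/300) * DA) * dist x y := by
      rw [hFx, hFy, dist_comm (ψA x) (f y)]
      have := hf2 y hyB x hxA
      rwa [dist_comm y x] at this
    have hGup : dist (Gc x) (Gc y) ≤ ((437/150) * (DA * DB) + (871/300) * DB) * dist x y :=
      hGx ▸ hGy ▸ hg2 x hxA y hyB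
    rw [hΨdist]
    exact sqrt3_le_mul _ _ _ _ _ (2 * t) _ _ hFup hGup (Hh2 x y) dist_nonneg dist_nonneg
      dist_nonneg hK0 hnumX
  refine ⟨Ψ, ?_, ?_, ?_, ?_⟩
  · -- noncontraction
    intro x y
    by_cases hxA : x ∈ A'
    · by_cases hyA : y ∈ A'
      · rw [hΨdist]
        refine le_trans (hψA x hxA y hyA).1 ?_
        rw [← HFA x hxA y hyA]
        exact le_sqrt3_1 _ _ _ dist_nonneg
      · have hyB : y ∈ B' := (hdichot y).resolve_left hyA
        by_cases hxB : x ∈ B'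
        · rw [hΨdist]
          refine le_trans (hψB x hxB y hyB).1 ?_
          rw [← HGB x hxB y hyB]
          exact le_sqrt3_2 _ _ _ dist_nonneg
        · exact Hcross_low x hxA hxB y hyB hyA
    · have hxB : x ∈ B' := (hdichot x).resolve_left hxA
      by_cases hyB : y ∈ B'
      · rw [hΨdist]
        refine le_trans (hψB x hxB y hyB).1 ?_
        rw [← HGB x hxB y hyB]
        exact le_sqrt3_2 _ _ _ dist_nonneg
      · have hyA : y ∈ A' := (hdichot y).resolve_right hyB
        rw [dist_comm x y, dist_comm (Ψ x) (Ψ y)]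
        exact Hcross_low y hyA hyB x hxB hxA
  · -- Lipschitz
    intro x y
    by_cases hxA : x ∈ A'
    · by_cases hyA : y ∈ A'
      · rw [hΨdist]
        have hF : dist (Fc x) (Fc y) ≤ DA * dist x y := by
          rw [HFA x hxA y hyA]
          exact (hψA x hxA y hyA).2
        exact sqrt3_le_mul _ _ _ DA ((1311/200) * DB * DA) t _ _ hF (HGA x hxA y hyA)
          (HhA x hxA y hyA) dist_nonneg dist_nonneg dist_nonneg hK0 hnumA
      · have hyB : y ∈ B' := (hdichot y).resolve_left hyA
        by_cases hxB : x ∈ B'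
        · rw [hΨdist]
          have hG : dist (Gc x) (Gc y) ≤ DB * dist x y := by
            rw [HGB x hxB y hyB]
            exact (hψB x hxB y hyB).2
          exact sqrt3_le_mul _ _ _ ((1311/200) * DA * DB) DB t _ _ (HFB x hxB y hyB) hG
            (HhB x hxB y hyB) dist_nonneg dist_nonneg dist_nonneg hK0 hnumB
        · exact Hcross_lip x hxA hxB y hyB hyA
    · have hxB : x ∈ B' := (hdichot x).resolve_left hxA
      by_cases hyB : y ∈ B'
      · rw [hΨdist]
        have hG : dist (Gc x) (Gc y) ≤ DB * dist x y := by
          rw [HGB x hxB y hyB]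
          exact (hψB x hxB y hyB).2
        exact sqrt3_le_mul _ _ _ ((1311/200) * DA * DB) DB t _ _ (HFB x hxB y hyB) hG
          (HhB x hxB y hyB) dist_nonneg dist_nonneg dist_nonneg hK0 hnumB
      · have hyA : y ∈ A' := (hdichot y).resolve_right hyB
        rw [dist_comm x y, dist_comm (Ψ x) (Ψ y)]
        exact Hcross_lip y hyA hyB x hxB hxA
  · -- domination on A
    intro u hu v hv
    have huA : u ∈ A' := subset_closure hu
    have hvA : v ∈ A' := subset_closure hv
    rw [hΨdist]
    have : dist (φA u) (φA v) = dist (Fc u) (Fc v) := by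
      rw [HFA u huA v hvA, hψAeq u hu, hψAeq v hv]
    rw [this]
    exact le_sqrt3_1 _ _ _ dist_nonneg
  · -- domination on B
    intro u hu v hv
    have huB : u ∈ B' := subset_closure hu
    have hvB : v ∈ B' := subset_closure hv
    rw [hΨdist]
    have : dist (φB u) (φB v) = dist (Gc u) (Gc v) := by
      rw [HGB u huB v hvB, hψBeq u hu, hψBeq v hv]
    rw [this]
    exact le_sqrt3_2 _ _ _ dist_nonneg

end
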